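/- Let (Σ,σ) be a finitely primitive Markov subshift on a countable alphabet and let A : Σ → ℝ be a bounded above, locally Hölder continuous potential. Let I ≥ I_F be an integer. If u ∈ C⁰(Σ_I) is a calibrated sub-action for the potential A|_{Σ_I}, then osc(u) := max_{x,y∈Σ_I} [u(x) − u(y)] ≤ Var(A) + K₀(sup A − inf A|_{⋃_{i∈F}[i]}). -/

import Mathlib

open MeasureTheory Filter Topology Set

/-- Membership in the Markov shift: admissible transitions at every coordinate. -/
def InShift (M : ℕ → ℕ → Bool) (x : ℕ → ℕ) : Prop := ∀ j, M (x j) (x (j+1)) = true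

/-- The one-sided countable Markov shift `Σ` associated to the transition matrix `M`,
as a subtype of `ℕ → ℕ` (with the product topology, which is the topology induced by
the metric `d(x,y) = λ^{min{j : x_j ≠ y_j}}`). -/
abbrev ShiftSpace (M : ℕ → ℕ → Bool) := {x : ℕ → ℕ // InShift M x}

/-- The left shift map `σ`. -/
def shiftMap (M : ℕ → ℕ → Bool) (x : ShiftSpace M) : ShiftSpace M :=
  ⟨fun j => x.1 (j+1), fun j => x.2 (j+1)⟩

/-- `Agree M k x y` means the points `x, y` coincide on the first `k` coordinates;
for `k ≥ 1` this is exactly `d(x,y) ≤ λ^k` for the metric of the paper. -/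
def Agree (M : ℕ → ℕ → Bool) (k : ℕ) (x y : ShiftSpace M) : Prop :=
  ∀ j < k, x.1 j = y.1 j

/-- The sets `B_n` of symbols admitting admissible words of length `n+1` starting at them. -/
def BSet (M : ℕ → ℕ → Bool) : ℕ → Set ℕ
  | 0 => {i | ∃ j, M i j = true}
  | n+1 => {i | ∃ j ∈ BSet M n, M i j = true}

/-- `⋂_{n ≥ 0} B_n`. -/
def BInf (M : ℕ → ℕ → Bool) : Set ℕ := ⋂ n, BSet M n

/-- `M` is primitive with connecting set `F` and connection length `K₀`: any two symbols
of `⋂ B_n` can be joined by an admissible word of length `K₀` with all letters in `F`. -/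
def Primitive (M : ℕ → ℕ → Bool) (F : Set ℕ) (K₀ : ℕ) : Prop :=
  ∀ i ∈ BInf M, ∀ j ∈ BInf M, ∃ p : ℕ → ℕ,
    p 0 = i ∧ p (K₀ + 1) = j ∧ (∀ t, 1 ≤ t → t ≤ K₀ → p t ∈ F) ∧
    (∀ t ≤ K₀, M (p t) (p (t+1)) = true)

/-- `A` is locally Hölder continuous with constant `H`:
`Var_k(A) ≤ H ⬝ λ^k` for every `k ≥ 1`. -/
def LocHolder (M : ℕ → ℕ → Bool) (lam H : ℝ) (A : ShiftSpace M → ℝ) : Prop :=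
  ∀ k : ℕ, 1 ≤ k → ∀ x y : ShiftSpace M, Agree M k x y → A x - A y ≤ H * lam ^ k

/-- `A` is coercive: `sup A|_{[i]} → -∞` as `i → ∞`. -/
def Coercive (M : ℕ → ℕ → Bool) (A : ShiftSpace M → ℝ) : Prop :=
  ∀ C : ℝ, ∃ N : ℕ, ∀ i : ℕ, N ≤ i → ∀ x : ShiftSpace M, x.1 0 = i → A x ≤ C

/-- The union of cylinders `⋃_{i ∈ F} [i]`. -/
def FCyl (M : ℕ → ℕ → Bool) (F : Set ℕ) : Set (ShiftSpace M) := {x | x.1 0 ∈ F}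

/-- `μ` is a `σ`-invariant Borel probability measure. -/
def InvProb (M : ℕ → ℕ → Bool) (μ : Measure (ShiftSpace M)) : Prop :=
  IsProbabilityMeasure μ ∧ μ.map (shiftMap M) = μ

/-- The ergodic maximizing value `β_A = sup {∫ A dμ : μ ∈ M_σ}`. -/
noncomputable def betaA (M : ℕ → ℕ → Bool) (A : ShiftSpace M → ℝ) : ℝ :=
  sSup {r | ∃ μ : Measure (ShiftSpace M), InvProb M μ ∧ Integrable A μ ∧ ∫ x, A x ∂μ = r}

/-- The compact subshift `Σ_I` on the finite alphabet `{0, …, I}`. -/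
def SpaceI (M : ℕ → ℕ → Bool) (I : ℕ) : Set (ShiftSpace M) := {x | ∀ j, x.1 j ≤ I}

/-- `β_A(I) = max {∫ A dμ : μ ∈ M_σ, supp μ ⊆ Σ_I}`. -/
noncomputable def betaAI (M : ℕ → ℕ → Bool) (A : ShiftSpace M → ℝ) (I : ℕ) : ℝ :=
  sSup {r | ∃ μ : Measure (ShiftSpace M), InvProb M μ ∧ μ (SpaceI M I) = 1 ∧
    Integrable A μ ∧ ∫ x, A x ∂μ = r}

/-- Birkhoff sum `S_k A`. -/
noncomputable def birkhoff (M : ℕ → ℕ → Bool) (A : ShiftSpace M → ℝ) (k : ℕ)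
    (x : ShiftSpace M) : ℝ :=
  ∑ j ∈ Finset.range k, A ((shiftMap M)^[j] x)

/-- The `k`-th variation `Var_k(A)`. -/
noncomputable def VarK (M : ℕ → ℕ → Bool) (A : ShiftSpace M → ℝ) (k : ℕ) : ℝ :=
  sSup {r | ∃ x y : ShiftSpace M, Agree M k x y ∧ A x - A y = r}

/-- `Var(A) = ∑_{k ≥ 1} Var_k(A)`. -/
noncomputable def VarSum (M : ℕ → ℕ → Bool) (A : ShiftSpace M → ℝ) : ℝ :=
  ∑' k : ℕ, VarK M A (k + 1)

/-- `sup A`. -/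
noncomputable def supA (M : ℕ → ℕ → Bool) (A : ShiftSpace M → ℝ) : ℝ :=
  sSup (Set.range A)

/-- `inf A|_{⋃_{i ∈ F} [i]}`. -/
noncomputable def infF (M : ℕ → ℕ → Bool) (F : Set ℕ) (A : ShiftSpace M → ℝ) : ℝ :=
  sInf (A '' FCyl M F)

/-- The defining set for `u_A(x)`: all values `S_k(A - β_A)(y)` with `σ^k(y) = x`. -/
noncomputable def uASet (M : ℕ → ℕ → Bool) (A : ShiftSpace M → ℝ) (x : ShiftSpace M) :
    Set ℝ :=
  {r | ∃ (k : ℕ) (y : ShiftSpace M), (shiftMap M)^[k] y = x ∧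
    birkhoff M A k y - k * betaA M A = r}

/-- The candidate minimal sub-action
`u_A(x) = sup {S_k(A - β_A)(y) : k ≥ 0, σ^k(y) = x}`. -/
noncomputable def uA (M : ℕ → ℕ → Bool) (A : ShiftSpace M → ℝ) (x : ShiftSpace M) : ℝ :=
  sSup (uASet M A x)

/-- The non-wandering set `Ω(A, I)` with respect to `A|_{Σ_I}`. -/
def NonWandering (M : ℕ → ℕ → Bool) (A : ShiftSpace M → ℝ) (I : ℕ) :
    Set (ShiftSpace M) :=
  {x | x ∈ SpaceI M I ∧ ∀ ε : ℝ, 0 < ε → ∀ m : ℕ,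
    ∃ y ∈ SpaceI M I, ∃ n : ℕ, 1 ≤ n ∧ Agree M m x y ∧
      Agree M m x ((shiftMap M)^[n] y) ∧
      |birkhoff M A n y - n * betaAI M A I| < ε}


section CalibAux

variable {M : ℕ → ℕ → Bool}

lemma shift_iter_coord (M : ℕ → ℕ → Bool) (m : ℕ) (w : ShiftSpace M) (t : ℕ) :
    ((shiftMap M)^[m] w).1 t = w.1 (t + m) := by
  induction m generalizing w t with
  | zero => rfl
  | succ k ih =>
    rw [Function.iterate_succ_apply, ih]
    show w.1 (t + k + 1) = w.1 (t + (k + 1))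
    rfl

lemma birkhoff_succ (M : ℕ → ℕ → Bool) (A : ShiftSpace M → ℝ) (k : ℕ) (w : ShiftSpace M) :
    birkhoff M A (k+1) w = birkhoff M A k w + A ((shiftMap M)^[k] w) := by
  unfold birkhoff; exact Finset.sum_range_succ _ _

lemma birkhoff_cons (M : ℕ → ℕ → Bool) (A : ShiftSpace M → ℝ) (k : ℕ) (w : ShiftSpace M) :
    birkhoff M A (k+1) w = A w + birkhoff M A k (shiftMap M w) := by
  unfold birkhoff
  rw [Finset.sum_range_succ']
  have h1 : ∀ j, A ((shiftMap M)^[j+1] w) = A ((shiftMap M)^[j] (shiftMap M w)) :=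
    fun j => by rw [Function.iterate_succ_apply]
  simp only [h1, Function.iterate_zero_apply]
  ring

lemma birkhoff_add (M : ℕ → ℕ → Bool) (A : ShiftSpace M → ℝ) (a b : ℕ) (w : ShiftSpace M) :
    birkhoff M A (a + b) w = birkhoff M A a w + birkhoff M A b ((shiftMap M)^[a] w) := by
  induction b with
  | zero => simp [birkhoff]
  | succ k ih =>
    rw [← Nat.add_assoc, birkhoff_succ, birkhoff_succ, ih]
    have h : (shiftMap M)^[a + k] w = (shiftMap M)^[k] ((shiftMap M)^[a] w) := by
      rw [Nat.add_comm, Function.iterate_add_apply]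
    rw [h]
    ring

lemma mem_BSet (M : ℕ → ℕ → Bool) : ∀ (n : ℕ) (w : ShiftSpace M) (m : ℕ), w.1 m ∈ BSet M n := by
  intro n
  induction n with
  | zero => intro w m; exact ⟨w.1 (m+1), w.2 m⟩
  | succ k ih => intro w m; exact ⟨w.1 (m+1), ih w (m+1), w.2 m⟩

lemma mem_BInf (M : ℕ → ℕ → Bool) (w : ShiftSpace M) (m : ℕ) : w.1 m ∈ BInf M :=
  Set.mem_iInter.mpr fun n => mem_BSet M n w m

lemma spaceI_iterate (M : ℕ → ℕ → Bool) (I : ℕ) (k : ℕ) (w : ShiftSpace M)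
    (hw : w ∈ SpaceI M I) : (shiftMap M)^[k] w ∈ SpaceI M I := by
  induction k with
  | zero => exact hw
  | succ k ih =>
    rw [Function.iterate_succ_apply']
    exact fun j => ih (j+1)

lemma subaction_iterate (M : ℕ → ℕ → Bool) (A u : ShiftSpace M → ℝ) (I : ℕ) (β : ℝ)
    (hsub : ∀ x ∈ SpaceI M I, A x + u x - u (shiftMap M x) ≤ β) :
    ∀ (m : ℕ) (w : ShiftSpace M), w ∈ SpaceI M I →
      u w + birkhoff M A m w - m * β ≤ u ((shiftMap M)^[m] w) := by
  intro m
  induction m with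
  | zero => intro w hw; simp [birkhoff]
  | succ k ih =>
    intro w hw
    have h1 := ih w hw
    have h2 := hsub _ (spaceI_iterate M I k w hw)
    rw [Function.iterate_succ_apply', birkhoff_succ]
    push_cast
    push_cast at h1
    linarith

lemma spaceI_compact (M : ℕ → ℕ → Bool) (I : ℕ) : IsCompact (SpaceI M I) := by
  rw [Topology.IsEmbedding.subtypeVal.isCompact_iff]
  have hT : IsCompact {f : ℕ → ℕ | ∀ j, f j ≤ I} := by
    have h : {f : ℕ → ℕ | ∀ j, f j ≤ I} = Set.pi Set.univ (fun _ : ℕ => Set.Iic I) := by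
      ext f
      constructor
      · intro hf i _; exact hf i
      · intro hf j; exact hf j (Set.mem_univ j)
    rw [h]
    exact isCompact_univ_pi (fun _ => (Set.finite_Iic I).isCompact)
  have himg : Subtype.val '' (SpaceI M I)
      = {f : ℕ → ℕ | InShift M f} ∩ {f : ℕ → ℕ | ∀ j, f j ≤ I} := by
    ext f
    constructor
    · rintro ⟨⟨g, hg⟩, hmem, rfl⟩; exact ⟨hg, hmem⟩
    · rintro ⟨h1, h2⟩; exact ⟨⟨f, h1⟩, h2, rfl⟩
  have hc1 : IsClosed {f : ℕ → ℕ | InShift M f} := by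
    have h : {f : ℕ → ℕ | InShift M f}
        = ⋂ j : ℕ, {f : ℕ → ℕ | M (f j) (f (j+1)) = true} := by
      ext f; simp [InShift, Set.mem_iInter]
    rw [h]
    refine isClosed_iInter fun j => ?_
    have h2 : {f : ℕ → ℕ | M (f j) (f (j+1)) = true}
        = (fun f : ℕ → ℕ => (f j, f (j+1))) ⁻¹' {p : ℕ × ℕ | M p.1 p.2 = true} := rfl
    rw [h2]
    exact (isClosed_discrete _).preimage ((continuous_apply j).prodMk (continuous_apply (j+1)))
  have hc2 : IsClosed {f : ℕ → ℕ | ∀ j, f j ≤ I} := by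
    have h : {f : ℕ → ℕ | ∀ j, f j ≤ I} = ⋂ j : ℕ, {f : ℕ → ℕ | f j ≤ I} := by
      ext f; simp [Set.mem_iInter]
    rw [h]
    refine isClosed_iInter fun j => ?_
    have h2 : {f : ℕ → ℕ | f j ≤ I} = (fun f : ℕ → ℕ => f j) ⁻¹' (Set.Iic I) := rfl
    rw [h2]
    exact (isClosed_discrete _).preimage (continuous_apply j)
  rw [himg]
  exact hT.of_isClosed_subset (hc1.inter hc2) Set.inter_subset_right

end CalibAux

/-- a calibrated sub-action `u` for `A|_{Σ_I}` (with `I ≥ I_F`) has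
oscillation at most `Var(A) + K₀ (sup A - inf A|_{⋃_{i∈F}[i]})`. -/
theorem calibrated_subaction_oscillation
    (M : ℕ → ℕ → Bool) (F : Set ℕ) (K₀ : ℕ) (lam H : ℝ)
    (hlam₀ : 0 < lam) (hlam₁ : lam < 1) (hH : 0 < H)
    (hprim : Primitive M F K₀) (hFfin : F.Finite)
    (A : ShiftSpace M → ℝ)
    (hbdd : BddAbove (Set.range A))
    (hhold : LocHolder M lam H A)
    (I : ℕ) (hI : sSup F ≤ I)
    (u : ShiftSpace M → ℝ)
    (hucont : ContinuousOn u (SpaceI M I))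
    (hsub : ∀ x ∈ SpaceI M I, A x + u x - u (shiftMap M x) ≤ betaAI M A I)
    (hcal : ∀ x ∈ SpaceI M I, ∃ y ∈ SpaceI M I, shiftMap M y = x ∧
      A y + u y - u x = betaAI M A I) :
    ∀ x ∈ SpaceI M I, ∀ y ∈ SpaceI M I,
      u x - u y ≤ VarSum M A + (K₀ : ℝ) * (supA M A - infF M F A) := by
  intro x hx y hy
  classical
  set β := betaAI M A I with hβdef
  have hAle : ∀ w : ShiftSpace M, A w ≤ supA M A := fun w => le_csSup hbdd ⟨w, rfl⟩
  -- variation facts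
  have hVbdd : ∀ k : ℕ, 1 ≤ k →
      BddAbove {r | ∃ a b : ShiftSpace M, Agree M k a b ∧ A a - A b = r} := by
    intro k hk
    refine ⟨H * lam ^ k, ?_⟩
    rintro r ⟨a, b, hab, rfl⟩
    exact hhold k hk a b hab
  have hVmem0 : ∀ k : ℕ, (0:ℝ) ∈ {r | ∃ a b : ShiftSpace M, Agree M k a b ∧ A a - A b = r} :=
    fun k => ⟨x, x, fun j _ => rfl, sub_self _⟩
  have hVnonneg : ∀ k : ℕ, 1 ≤ k → 0 ≤ VarK M A k :=
    fun k hk => le_csSup (hVbdd k hk) (hVmem0 k)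
  have hVle : ∀ k : ℕ, 1 ≤ k → VarK M A k ≤ H * lam ^ k := by
    intro k hk
    refine csSup_le ⟨0, hVmem0 k⟩ ?_
    rintro r ⟨a, b, hab, rfl⟩
    exact hhold k hk a b hab
  have hsummable : Summable (fun k : ℕ => VarK M A (k + 1)) := by
    refine Summable.of_nonneg_of_le (fun k => hVnonneg (k+1) (by omega))
      (fun k => hVle (k+1) (by omega)) ?_
    have hgeo : Summable (fun k : ℕ => (H * lam) * lam ^ k) :=
      (summable_geometric_of_lt_one hlam₀.le hlam₁).mul_left _
    exact hgeo.congr (fun k => by rw [pow_succ]; ring)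
  -- lower bound for A on the union of F-cylinders
  have hFbdd : BddBelow (A '' FCyl M F) := by
    have hun : A '' FCyl M F = ⋃ i ∈ F, A '' {w : ShiftSpace M | w.1 0 = i} := by
      ext r
      simp only [Set.mem_image, Set.mem_iUnion, FCyl, Set.mem_setOf_eq]
      constructor
      · rintro ⟨w, hw, rfl⟩; exact ⟨w.1 0, hw, w, rfl, rfl⟩
      · rintro ⟨i, hi, w, hw, rfl⟩; exact ⟨w, by rw [hw]; exact hi, rfl⟩
    rw [hun, Set.Finite.bddBelow_biUnion hFfin]
    intro i _
    by_cases hne : {w : ShiftSpace M | w.1 0 = i}.Nonempty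
    · obtain ⟨w₀, hw₀⟩ := hne
      refine ⟨A w₀ - H * lam, ?_⟩
      rintro r ⟨w', hw', rfl⟩
      have h1 : A w₀ - A w' ≤ H * lam ^ 1 := by
        refine hhold 1 le_rfl w₀ w' ?_
        intro j hj
        interval_cases j
        rw [hw₀, hw']
      rw [pow_one] at h1
      linarith
    · rw [Set.not_nonempty_iff_eq_empty] at hne
      rw [hne, Set.image_empty]
      exact bddBelow_empty
  have hinfF : ∀ w : ShiftSpace M, w.1 0 ∈ F → infF M F A ≤ A w :=
    fun w hw => csInf_le hFbdd ⟨w, hw, rfl⟩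
  -- the backward calibrated orbit of x
  have hcal' : ∀ w : {v : ShiftSpace M // v ∈ SpaceI M I},
      ∃ v : ShiftSpace M, v ∈ SpaceI M I ∧ shiftMap M v = w.1 ∧ A v + u v - u w.1 = β := by
    intro w
    obtain ⟨v, hv1, hv2, hv3⟩ := hcal w.1 w.2
    exact ⟨v, hv1, hv2, hv3⟩
  choose g hg1 hg2 hg3 using hcal'
  let xb : ℕ → {v : ShiftSpace M // v ∈ SpaceI M I} := fun n =>
    Nat.rec (motive := fun _ => {v : ShiftSpace M // v ∈ SpaceI M I})
      ⟨x, hx⟩ (fun _ prev => ⟨g prev, hg1 prev⟩) n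
  have hxb0 : (xb 0).1 = x := rfl
  have hxbval : ∀ n, (xb (n+1)).1 = g (xb n) := fun n => rfl
  have hxbshift : ∀ n, shiftMap M (xb (n+1)).1 = (xb n).1 := by
    intro n; rw [hxbval]; exact hg2 (xb n)
  have key : ∀ n, u x = u (xb n).1 + birkhoff M A n (xb n).1 - n * β := by
    intro n
    induction n with
    | zero => simp [hxb0, birkhoff]
    | succ n ih =>
      have h3 : A (xb (n+1)).1 + u (xb (n+1)).1 - u (xb n).1 = β := by
        rw [hxbval]; exact hg3 (xb n)
      rw [birkhoff_cons, hxbshift n]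
      push_cast
      push_cast at ih
      linarith
  -- β ≤ sup A
  have hcompact := spaceI_compact M I
  have hBu : BddAbove (u '' SpaceI M I) := hcompact.bddAbove_image hucont
  set Bu := sSup (u '' SpaceI M I) with hBudef
  have hbeta : β ≤ supA M A := by
    have hn : ∀ n : ℕ, 1 ≤ n → β ≤ supA M A + (Bu - u x) / n := by
      intro n hn1
      have h1 := key n
      have h2 : birkhoff M A n (xb n).1 ≤ n * supA M A := by
        have h := Finset.sum_le_card_nsmul (Finset.range n)
          (fun j => A ((shiftMap M)^[j] (xb n).1)) (supA M A) (fun j _ => hAle _)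
        simpa [birkhoff, nsmul_eq_mul] using h
      have h3 : u (xb n).1 ≤ Bu := le_csSup hBu ⟨(xb n).1, (xb n).2, rfl⟩
      have hnpos : (0:ℝ) < n := by
        have : (1:ℝ) ≤ n := by exact_mod_cast hn1
        linarith
      have h4 : (n:ℝ) * β ≤ n * supA M A + (Bu - u x) := by linarith
      have h5 : β - supA M A ≤ (Bu - u x) / n := by
        rw [le_div_iff₀ hnpos]
        nlinarith
      linarith
    have hlim : Tendsto (fun n : ℕ => supA M A + (Bu - u x) / n) atTop (𝓝 (supA M A + 0)) :=
      tendsto_const_nhds.add (tendsto_const_div_atTop_nhds_zero_nat _)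
    rw [add_zero] at hlim
    exact ge_of_tendsto hlim (eventually_atTop.mpr ⟨1, fun n h => hn n h⟩)
  -- the main estimate, for every length m
  have main : ∀ m : ℕ, ∃ z : ShiftSpace M, z ∈ SpaceI M I ∧
      (∀ t, t ≤ m → (xb (m+1)).1.1 t = z.1 t) ∧
      u x - u y ≤ (u (xb (m+1)).1 - u z) + VarSum M A
        + (K₀:ℝ) * (supA M A - infF M F A) := by
    intro m
    set n := m + 1 with hn
    set w : ShiftSpace M := (xb n).1 with hwdef
    have hwI : w ∈ SpaceI M I := (xb n).2
    obtain ⟨p, hp0, hpK, hpF, hpM⟩ := hprim (w.1 m) (mem_BInf M w m) (y.1 0) (mem_BInf M y 0)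
    set C := n + K₀ with hC
    let zf : ℕ → ℕ := fun t => if t ≤ m then w.1 t else if t ≤ C then p (t - m) else y.1 (t - C)
    have zf_def : ∀ t, zf t = if t ≤ m then w.1 t else if t ≤ C then p (t - m) else y.1 (t - C) :=
      fun t => rfl
    have hzf_shift : InShift M zf := by
      intro t
      rcases lt_trichotomy t m with h | h | h
      · rw [zf_def t, zf_def (t+1), if_pos (le_of_lt h), if_pos (by omega)]
        exact w.2 t
      · subst h
        rw [zf_def t, zf_def (t+1), if_pos le_rfl, if_neg (by omega), if_pos (by omega)]
        rw [show t + 1 - t = 1 by omega, ← hp0]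
        exact hpM 0 (Nat.zero_le _)
      · by_cases h2 : t ≤ m + K₀
        · rw [zf_def t, zf_def (t+1), if_neg (by omega), if_pos (by omega),
            if_neg (by omega), if_pos (by omega)]
          rw [show t + 1 - m = (t - m) + 1 by omega]
          exact hpM (t - m) (by omega)
        · by_cases h3 : t ≤ C
          · rw [zf_def t, zf_def (t+1), if_neg (by omega), if_pos (by omega),
              if_neg (by omega), if_neg (by omega)]
            rw [show t - m = K₀ + 1 by omega, hpK, show t + 1 - C = 1 by omega]
            exact y.2 0
          · rw [zf_def t, zf_def (t+1), if_neg (by omega), if_neg (by omega),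
              if_neg (by omega), if_neg (by omega)]
            rw [show t + 1 - C = (t - C) + 1 by omega]
            exact y.2 (t - C)
    let z : ShiftSpace M := ⟨zf, hzf_shift⟩
    have hzI : z ∈ SpaceI M I := by
      intro t
      show zf t ≤ I
      rw [zf_def]
      split_ifs with h1 h2
      · exact hwI t
      · by_cases h3 : t - m ≤ K₀
        · have hmem : p (t - m) ∈ F := hpF (t - m) (by omega) h3
          exact le_trans (le_csSup hFfin.bddAbove hmem) hI
        · rw [show t - m = K₀ + 1 by omega, hpK]
          exact hy 0
      · exact hy _
    have hagree : ∀ t, t ≤ m → w.1 t = z.1 t := by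
      intro t ht
      show w.1 t = zf t
      rw [zf_def, if_pos ht]
    have hzshift : (shiftMap M)^[C] z = y := by
      apply Subtype.ext
      funext t
      rw [shift_iter_coord]
      show zf (t + C) = y.1 t
      rcases Nat.eq_zero_or_pos t with ht | ht
      · subst ht
        rw [zf_def, if_neg (by omega), if_pos (by omega), show 0 + C - m = K₀ + 1 by omega, hpK]
      · rw [zf_def, if_neg (by omega), if_neg (by omega),
          show t + C - C = t from by omega]
    have hkey := key n
    have hsubz := subaction_iterate M A u I β hsub C z hzI
    rw [hzshift] at hsubz
    have hsplit : birkhoff M A C z = birkhoff M A n z + birkhoff M A K₀ ((shiftMap M)^[n] z) :=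
      birkhoff_add M A n K₀ z
    -- variation bound
    have hvar : birkhoff M A n w - birkhoff M A n z ≤ VarSum M A := by
      have hterm : ∀ j ∈ Finset.range n,
          A ((shiftMap M)^[j] w) - A ((shiftMap M)^[j] z) ≤ VarK M A (n - j) := by
        intro j hj
        rw [Finset.mem_range] at hj
        have hagj : Agree M (n - j) ((shiftMap M)^[j] w) ((shiftMap M)^[j] z) := by
          intro t ht
          rw [shift_iter_coord, shift_iter_coord]
          exact hagree (t + j) (by omega)
        exact le_csSup (hVbdd (n - j) (by omega)) ⟨_, _, hagj, rfl⟩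
      have h1 : birkhoff M A n w - birkhoff M A n z
          = ∑ j ∈ Finset.range n, (A ((shiftMap M)^[j] w) - A ((shiftMap M)^[j] z)) :=
        (Finset.sum_sub_distrib _ _).symm
      have h2 : ∑ j ∈ Finset.range n, (A ((shiftMap M)^[j] w) - A ((shiftMap M)^[j] z))
          ≤ ∑ j ∈ Finset.range n, VarK M A (n - j) := Finset.sum_le_sum hterm
      have h3 : ∑ j ∈ Finset.range n, VarK M A (n - j)
          = ∑ j ∈ Finset.range n, VarK M A (j + 1) := by
        rw [← Finset.sum_range_reflect (fun j => VarK M A (j+1)) n]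
        refine Finset.sum_congr rfl ?_
        intro j hj
        rw [Finset.mem_range] at hj
        rw [show n - j = n - 1 - j + 1 from by omega]
      have h4 : ∑ j ∈ Finset.range n, VarK M A (j + 1) ≤ VarSum M A :=
        Summable.sum_le_tsum _ (fun i _ => hVnonneg (i+1) (by omega)) hsummable
      rw [h1]
      linarith
    -- middle bound
    have hmid : (K₀:ℝ) * β - birkhoff M A K₀ ((shiftMap M)^[n] z)
        ≤ (K₀:ℝ) * (supA M A - infF M F A) := by
      have hterm : ∀ j ∈ Finset.range K₀,
          infF M F A ≤ A ((shiftMap M)^[j] ((shiftMap M)^[n] z)) := by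
        intro j hj
        rw [Finset.mem_range] at hj
        apply hinfF
        rw [← Function.iterate_add_apply, shift_iter_coord]
        show zf (0 + (j + n)) ∈ F
        rw [zf_def, if_neg (by omega), if_pos (by omega), show 0 + (j + n) - m = j + 1 by omega]
        exact hpF (j+1) (by omega) (by omega)
      have hsum : (K₀:ℝ) * infF M F A ≤ birkhoff M A K₀ ((shiftMap M)^[n] z) := by
        have h := Finset.card_nsmul_le_sum (Finset.range K₀)
          (fun j => A ((shiftMap M)^[j] ((shiftMap M)^[n] z))) (infF M F A) hterm
        simpa [birkhoff, nsmul_eq_mul] using h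
      have hb : (K₀:ℝ) * β ≤ (K₀:ℝ) * supA M A :=
        mul_le_mul_of_nonneg_left hbeta (Nat.cast_nonneg K₀)
      nlinarith [hsum, hb]
    refine ⟨z, hzI, fun t ht => hagree t ht, ?_⟩
    have hCβ : (C:ℝ) * β = (n:ℝ) * β + (K₀:ℝ) * β := by
      rw [hC]; push_cast; ring
    rw [hkey]
    linarith [hsubz, hvar, hmid]
  choose zs hzs1 hzs2 hzs3 using main
  haveI : FirstCountableTopology (ShiftSpace M) :=
    Topology.IsInducing.subtypeVal.firstCountableTopology
  obtain ⟨pt, hpt, φ, hφ, hconv⟩ :=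
    hcompact.tendsto_subseq (x := fun m : ℕ => (xb (m+1)).1) (fun m => (xb (m+1)).2)
  have hconv' : Tendsto (fun k => (xb (φ k + 1)).1) atTop (𝓝 pt) := hconv
  have hco : ∀ t : ℕ, ∀ᶠ k in atTop, (xb (φ k + 1)).1.1 t = pt.1 t := by
    intro t
    have h1 := tendsto_pi_nhds.mp (tendsto_subtype_rng.mp hconv') t
    rw [show (𝓝 (pt.1 t)) = pure (pt.1 t) from by rw [nhds_discrete]] at h1
    exact tendsto_pure.mp h1
  have hzconv : Tendsto (fun k => zs (φ k)) atTop (𝓝 pt) := by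
    rw [tendsto_subtype_rng, tendsto_pi_nhds]
    intro t
    rw [show (𝓝 (pt.1 t)) = pure (pt.1 t) from by rw [nhds_discrete], tendsto_pure]
    have h2 : ∀ᶠ k in atTop, t ≤ φ k :=
      eventually_atTop.mpr ⟨t, fun k hk => le_trans hk (hφ.le_apply)⟩
    filter_upwards [hco t, h2] with k hk1 hk2
    rw [← hzs2 (φ k) t hk2]
    exact hk1
  have hupt1 : Tendsto (fun k => u ((xb (φ k + 1)).1)) atTop (𝓝 (u pt)) := by
    refine Tendsto.comp (hucont pt hpt) ?_
    rw [tendsto_nhdsWithin_iff]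
    exact ⟨hconv', Eventually.of_forall (fun k => (xb (φ k + 1)).2)⟩
  have hupt2 : Tendsto (fun k => u (zs (φ k))) atTop (𝓝 (u pt)) := by
    refine Tendsto.comp (hucont pt hpt) ?_
    rw [tendsto_nhdsWithin_iff]
    exact ⟨hzconv, Eventually.of_forall (fun k => hzs1 (φ k))⟩
  have hdiff : Tendsto (fun k => u ((xb (φ k + 1)).1) - u (zs (φ k))) atTop (𝓝 0) := by
    have h := hupt1.sub hupt2
    rwa [sub_self] at h
  have hfinal : u x - u y - (VarSum M A + (K₀:ℝ) * (supA M A - infF M F A)) ≤ 0 := by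
    refine ge_of_tendsto hdiff ?_
    refine Eventually.of_forall (fun k => ?_)
    have h := hzs3 (φ k)
    linarith
  linarith
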